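/- Concavity/convexity of the q-mean: extend θ_q to the diagonal by θ_q(a,a) := a. Then the function (a,b) ↦ θ_q(a,b) on (0,∞) × (0,∞) is concave if q ∈ (1,2) and convex if q ∈ (2,∞), where θ_q(a,b) := ((q−1)/q) (a^q − b^q)/(a^{q−1} − b^{q−1}) for a ≠ b. -/

import Mathlib

open scoped Topology

open Set MeasureTheory

/-- The `q`-mean of two positive reals, extended to the diagonal by `θ_q(a,a) := a`. -/
noncomputable def qMean (q a b : ℝ) : ℝ :=
  if a = b then a else (q - 1)/q * (a ^ q - b ^ q) / (a ^ (q - 1) - b ^ (q - 1))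

/-- Positivity of the weighted power combination. -/
lemma qMeanAux.psi_pos {p t a b : ℝ} (hp : 0 < p) (ht : t ∈ Icc (0:ℝ) 1)
    (ha : 0 < a) (hb : 0 < b) : 0 < (1 - t) * a ^ p + t * b ^ p := by
  have ha' : 0 < a ^ p := Real.rpow_pos_of_pos ha p
  have hb' : 0 < b ^ p := Real.rpow_pos_of_pos hb p
  have hm : 0 < min (a ^ p) (b ^ p) := lt_min ha' hb'
  have h1 : 0 ≤ (1 - t) * (a ^ p - min (a ^ p) (b ^ p)) :=
    mul_nonneg (by linarith [ht.2]) (by linarith [min_le_left (a ^ p) (b ^ p)])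
  have h2 : 0 ≤ t * (b ^ p - min (a ^ p) (b ^ p)) :=
    mul_nonneg ht.1 (by linarith [min_le_right (a ^ p) (b ^ p)])
  nlinarith

/-- Abstract lemma: the `1/p`-power of a positive, `p`-homogeneous concave function on a
cone is concave. -/
lemma qMeanAux.concaveOn_rpow_of_concaveOn {p : ℝ} (hp : 0 < p) {S : Set (ℝ × ℝ)}
    {ψ : ℝ × ℝ → ℝ} (hψ : ConcaveOn ℝ S ψ) (hpos : ∀ z ∈ S, 0 < ψ z)
    (hcone : ∀ z ∈ S, ∀ c : ℝ, 0 < c → c • z ∈ S)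
    (hhom : ∀ z ∈ S, ∀ c : ℝ, 0 < c → ψ (c • z) = c ^ p * ψ z) :
    ConcaveOn ℝ S (fun z => ψ z ^ (1/p)) := by
  refine ⟨hψ.1, fun x hx y hy s₁ s₂ hs₁ hs₂ hsum => ?_⟩
  rcases eq_or_lt_of_le hs₁ with rfl | hs₁
  · have hs₂1 : s₂ = 1 := by linarith
    subst hs₂1; simp
  rcases eq_or_lt_of_le hs₂ with rfl | hs₂
  · have hs₁1 : s₁ = 1 := by linarith
    subst hs₁1; simp
  have hX : 0 < ψ x := hpos x hx
  have hY : 0 < ψ y := hpos y hy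
  set A := ψ x ^ (1/p) with hAdef
  set B := ψ y ^ (1/p) with hBdef
  have hA : 0 < A := Real.rpow_pos_of_pos hX _
  have hB : 0 < B := Real.rpow_pos_of_pos hY _
  set C := s₁ * A + s₂ * B with hCdef
  have hC : 0 < C := by positivity
  have hZS : s₁ • x + s₂ • y ∈ S := hψ.1 hx hy hs₁.le hs₂.le hsum
  have hZ : 0 < ψ (s₁ • x + s₂ • y) := hpos _ hZS
  have hAp : A ^ p = ψ x := by
    rw [hAdef, one_div, Real.rpow_inv_rpow hX.le hp.ne']
  have hBp : B ^ p = ψ y := by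
    rw [hBdef, one_div, Real.rpow_inv_rpow hY.le hp.ne']
  simp only [smul_eq_mul]
  show C ≤ ψ (s₁ • x + s₂ • y) ^ (1/p)
  rw [one_div, Real.le_rpow_inv_iff_of_pos hC.le hZ.le hp]
  -- It suffices to show `C ^ p ≤ ψ (s₁ • x + s₂ • y)`.
  have hx' : A⁻¹ • x ∈ S := hcone x hx A⁻¹ (by positivity)
  have hy' : B⁻¹ • y ∈ S := hcone y hy B⁻¹ (by positivity)
  have hψx' : ψ (A⁻¹ • x) = 1 := by
    rw [hhom x hx A⁻¹ (by positivity), Real.inv_rpow hA.le, hAp, inv_mul_cancel₀ hX.ne']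
  have hψy' : ψ (B⁻¹ • y) = 1 := by
    rw [hhom y hy B⁻¹ (by positivity), Real.inv_rpow hB.le, hBp, inv_mul_cancel₀ hY.ne']
  have hl1 : (0:ℝ) ≤ s₁ * A / C := by positivity
  have hl2 : (0:ℝ) ≤ s₂ * B / C := by positivity
  have hlsum : s₁ * A / C + s₂ * B / C = 1 := by
    field_simp
    exact hCdef.symm
  have key := hψ.2 hx' hy' hl1 hl2 hlsum
  have harg : (s₁ * A / C) • (A⁻¹ • x) + (s₂ * B / C) • (B⁻¹ • y)
      = C⁻¹ • (s₁ • x + s₂ • y) := by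
    have e1 : (s₁ * A / C) * A⁻¹ = C⁻¹ * s₁ := by field_simp
    have e2 : (s₂ * B / C) * B⁻¹ = C⁻¹ * s₂ := by field_simp
    rw [smul_smul, smul_smul, smul_add, smul_smul, smul_smul, e1, e2]
  rw [harg, hhom _ hZS C⁻¹ (by positivity), hψx', hψy', smul_eq_mul, smul_eq_mul,
    mul_one, mul_one, hlsum, Real.inv_rpow hC.le] at key
  have hCp : 0 < C ^ p := Real.rpow_pos_of_pos hC p
  calc C ^ p = C ^ p * 1 := (mul_one _).symm
    _ ≤ C ^ p * ((C ^ p)⁻¹ * ψ (s₁ • x + s₂ • y)) :=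
        mul_le_mul_of_nonneg_left key hCp.le
    _ = ψ (s₁ • x + s₂ • y) := by
        rw [← mul_assoc, mul_inv_cancel₀ hCp.ne', one_mul]

/-- Abstract lemma: the `1/p`-power of a positive, `p`-homogeneous convex function on a
cone is convex. -/
lemma qMeanAux.convexOn_rpow_of_convexOn {p : ℝ} (hp : 0 < p) {S : Set (ℝ × ℝ)}
    {ψ : ℝ × ℝ → ℝ} (hψ : ConvexOn ℝ S ψ) (hpos : ∀ z ∈ S, 0 < ψ z)
    (hcone : ∀ z ∈ S, ∀ c : ℝ, 0 < c → c • z ∈ S)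
    (hhom : ∀ z ∈ S, ∀ c : ℝ, 0 < c → ψ (c • z) = c ^ p * ψ z) :
    ConvexOn ℝ S (fun z => ψ z ^ (1/p)) := by
  refine ⟨hψ.1, fun x hx y hy s₁ s₂ hs₁ hs₂ hsum => ?_⟩
  rcases eq_or_lt_of_le hs₁ with rfl | hs₁
  · have hs₂1 : s₂ = 1 := by linarith
    subst hs₂1; simp
  rcases eq_or_lt_of_le hs₂ with rfl | hs₂
  · have hs₁1 : s₁ = 1 := by linarith
    subst hs₁1; simp
  have hX : 0 < ψ x := hpos x hx
  have hY : 0 < ψ y := hpos y hy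
  set A := ψ x ^ (1/p) with hAdef
  set B := ψ y ^ (1/p) with hBdef
  have hA : 0 < A := Real.rpow_pos_of_pos hX _
  have hB : 0 < B := Real.rpow_pos_of_pos hY _
  set C := s₁ * A + s₂ * B with hCdef
  have hC : 0 < C := by positivity
  have hZS : s₁ • x + s₂ • y ∈ S := hψ.1 hx hy hs₁.le hs₂.le hsum
  have hZ : 0 < ψ (s₁ • x + s₂ • y) := hpos _ hZS
  have hAp : A ^ p = ψ x := by
    rw [hAdef, one_div, Real.rpow_inv_rpow hX.le hp.ne']
  have hBp : B ^ p = ψ y := by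
    rw [hBdef, one_div, Real.rpow_inv_rpow hY.le hp.ne']
  simp only [smul_eq_mul]
  show ψ (s₁ • x + s₂ • y) ^ (1/p) ≤ C
  rw [one_div, Real.rpow_inv_le_iff_of_pos hZ.le hC.le hp]
  -- It suffices to show `ψ (s₁ • x + s₂ • y) ≤ C ^ p`.
  have hx' : A⁻¹ • x ∈ S := hcone x hx A⁻¹ (by positivity)
  have hy' : B⁻¹ • y ∈ S := hcone y hy B⁻¹ (by positivity)
  have hψx' : ψ (A⁻¹ • x) = 1 := by
    rw [hhom x hx A⁻¹ (by positivity), Real.inv_rpow hA.le, hAp, inv_mul_cancel₀ hX.ne']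
  have hψy' : ψ (B⁻¹ • y) = 1 := by
    rw [hhom y hy B⁻¹ (by positivity), Real.inv_rpow hB.le, hBp, inv_mul_cancel₀ hY.ne']
  have hl1 : (0:ℝ) ≤ s₁ * A / C := by positivity
  have hl2 : (0:ℝ) ≤ s₂ * B / C := by positivity
  have hlsum : s₁ * A / C + s₂ * B / C = 1 := by
    field_simp
    exact hCdef.symm
  have key := hψ.2 hx' hy' hl1 hl2 hlsum
  have harg : (s₁ * A / C) • (A⁻¹ • x) + (s₂ * B / C) • (B⁻¹ • y)
      = C⁻¹ • (s₁ • x + s₂ • y) := by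
    have e1 : (s₁ * A / C) * A⁻¹ = C⁻¹ * s₁ := by field_simp
    have e2 : (s₂ * B / C) * B⁻¹ = C⁻¹ * s₂ := by field_simp
    rw [smul_smul, smul_smul, smul_add, smul_smul, smul_smul, e1, e2]
  rw [harg, hhom _ hZS C⁻¹ (by positivity), hψx', hψy', smul_eq_mul, smul_eq_mul,
    mul_one, mul_one, hlsum, Real.inv_rpow hC.le] at key
  have hCp : 0 < C ^ p := Real.rpow_pos_of_pos hC p
  calc ψ (s₁ • x + s₂ • y)
      = C ^ p * ((C ^ p)⁻¹ * ψ (s₁ • x + s₂ • y)) := by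
        rw [← mul_assoc, mul_inv_cancel₀ hCp.ne', one_mul]
    _ ≤ C ^ p * 1 := mul_le_mul_of_nonneg_left key hCp.le
    _ = C ^ p := mul_one _

/-- Homogeneity of the weighted power combination. -/
lemma qMeanAux.psi_hom {p t : ℝ} (z : ℝ × ℝ) (hz : z ∈ Ioi (0:ℝ) ×ˢ Ioi (0:ℝ))
    {c : ℝ} (hc : 0 < c) :
    (1 - t) * (c • z).1 ^ p + t * (c • z).2 ^ p
      = c ^ p * ((1 - t) * z.1 ^ p + t * z.2 ^ p) := by
  have h1 : (c • z).1 = c * z.1 := rfl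
  have h2 : (c • z).2 = c * z.2 := rfl
  rw [h1, h2, Real.mul_rpow hc.le (le_of_lt hz.1), Real.mul_rpow hc.le (le_of_lt hz.2)]
  ring

/-- Concavity of `(a, b) ↦ (1-t) a^p + t b^p`. -/
lemma qMeanAux.psi_concaveOn {p t : ℝ} (hp0 : 0 ≤ p) (hp1 : p ≤ 1) (ht : t ∈ Icc (0:ℝ) 1) :
    ConcaveOn ℝ (Ioi (0:ℝ) ×ˢ Ioi (0:ℝ))
      (fun z : ℝ × ℝ => (1 - t) * z.1 ^ p + t * z.2 ^ p) := by
  have hS : Convex ℝ (Ioi (0:ℝ) ×ˢ Ioi (0:ℝ)) := (convex_Ioi 0).prod (convex_Ioi 0)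
  have h1 : ConcaveOn ℝ (Ioi (0:ℝ) ×ˢ Ioi (0:ℝ)) (fun z : ℝ × ℝ => z.1 ^ p) := by
    refine ((Real.concaveOn_rpow hp0 hp1).comp_linearMap (LinearMap.fst ℝ ℝ ℝ)).subset ?_ hS
    intro z hz
    exact (le_of_lt hz.1 : (0:ℝ) ≤ z.1)
  have h2 : ConcaveOn ℝ (Ioi (0:ℝ) ×ˢ Ioi (0:ℝ)) (fun z : ℝ × ℝ => z.2 ^ p) := by
    refine ((Real.concaveOn_rpow hp0 hp1).comp_linearMap (LinearMap.snd ℝ ℝ ℝ)).subset ?_ hS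
    intro z hz
    exact (le_of_lt hz.2 : (0:ℝ) ≤ z.2)
  exact (h1.smul (by linarith [ht.2] : (0:ℝ) ≤ 1 - t)).add (h2.smul ht.1)

/-- Convexity of `(a, b) ↦ (1-t) a^p + t b^p` for `p ≥ 1`. -/
lemma qMeanAux.psi_convexOn {p t : ℝ} (hp1 : 1 ≤ p) (ht : t ∈ Icc (0:ℝ) 1) :
    ConvexOn ℝ (Ioi (0:ℝ) ×ˢ Ioi (0:ℝ))
      (fun z : ℝ × ℝ => (1 - t) * z.1 ^ p + t * z.2 ^ p) := by
  have hS : Convex ℝ (Ioi (0:ℝ) ×ˢ Ioi (0:ℝ)) := (convex_Ioi 0).prod (convex_Ioi 0)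
  have h1 : ConvexOn ℝ (Ioi (0:ℝ) ×ˢ Ioi (0:ℝ)) (fun z : ℝ × ℝ => z.1 ^ p) := by
    refine ((convexOn_rpow hp1).comp_linearMap (LinearMap.fst ℝ ℝ ℝ)).subset ?_ hS
    intro z hz
    exact (le_of_lt hz.1 : (0:ℝ) ≤ z.1)
  have h2 : ConvexOn ℝ (Ioi (0:ℝ) ×ˢ Ioi (0:ℝ)) (fun z : ℝ × ℝ => z.2 ^ p) := by
    refine ((convexOn_rpow hp1).comp_linearMap (LinearMap.snd ℝ ℝ ℝ)).subset ?_ hS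
    intro z hz
    exact (le_of_lt hz.2 : (0:ℝ) ≤ z.2)
  exact (h1.smul (by linarith [ht.2] : (0:ℝ) ≤ 1 - t)).add (h2.smul ht.1)

/-- Interval-integrability of the integrand. -/
lemma qMeanAux.integrable {p : ℝ} (hp : 0 < p) {z : ℝ × ℝ}
    (hz : z ∈ Ioi (0:ℝ) ×ˢ Ioi (0:ℝ)) :
    IntervalIntegrable (fun t => ((1 - t) * z.1 ^ p + t * z.2 ^ p) ^ (1/p)) volume 0 1 := by
  apply ContinuousOn.intervalIntegrable
  rw [uIcc_of_le (zero_le_one : (0:ℝ) ≤ 1)]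
  apply ContinuousOn.rpow_const
  · exact (((continuous_const.sub continuous_id).mul continuous_const).add
      (continuous_id.mul continuous_const)).continuousOn
  · intro t ht
    exact Or.inl (qMeanAux.psi_pos hp ht hz.1 hz.2).ne'

/-- Integral of `t ↦ (c + t d) ^ r` over `[0,1]`. -/
lemma qMeanAux.integral_linear_rpow {c d r : ℝ} (hd : d ≠ 0) (hr : 0 < r)
    (hpos : ∀ t ∈ Icc (0:ℝ) 1, 0 < c + t * d) :
    ∫ t in (0:ℝ)..1, (c + t * d) ^ r
      = ((c + d) ^ (r+1) - c ^ (r+1)) / ((r+1) * d) := by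
  have he1 : (1:ℝ) ≤ r + 1 := by linarith
  have he : r + 1 ≠ 0 := by positivity
  have hderiv : ∀ t ∈ uIcc (0:ℝ) 1,
      HasDerivAt (fun t => (c + t * d) ^ (r+1) / ((r+1) * d)) ((c + t * d) ^ r) t := by
    intro t ht
    have h1 : HasDerivAt (fun t : ℝ => c + t * d) d t := by
      simpa using ((hasDerivAt_id t).mul_const d).const_add c
    have h2 := (h1.rpow_const (Or.inr he1)).div_const ((r+1) * d)
    refine h2.congr_deriv ?_
    rw [show r + 1 - 1 = r by ring]
    field_simp
  have hint : IntervalIntegrable (fun t => (c + t * d) ^ r) volume 0 1 := by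
    apply ContinuousOn.intervalIntegrable
    apply ContinuousOn.rpow_const
    · exact (continuous_const.add (continuous_id.mul continuous_const)).continuousOn
    · intro t ht
      rw [uIcc_of_le (zero_le_one : (0:ℝ) ≤ 1)] at ht
      exact Or.inl (hpos t ht).ne'
  rw [intervalIntegral.integral_eq_sub_of_hasDerivAt hderiv hint]
  rw [show c + 1 * d = c + d by ring, show c + 0 * d = c by ring, div_sub_div_same]

/-- Integral representation of the `q`-mean. -/
lemma qMeanAux.qMean_eq_integral {q : ℝ} (hq : 1 < q) {a b : ℝ} (ha : 0 < a) (hb : 0 < b) :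
    qMean q a b
      = ∫ t in (0:ℝ)..1, ((1 - t) * a ^ (q-1) + t * b ^ (q-1)) ^ (1/(q-1)) := by
  have hp : 0 < q - 1 := by linarith
  have hp' : q - 1 ≠ 0 := hp.ne'
  by_cases hab : a = b
  · subst hab
    rw [qMean, if_pos rfl]
    have hpt : ∀ t : ℝ, ((1 - t) * a ^ (q-1) + t * a ^ (q-1)) ^ (1/(q-1)) = a := by
      intro t
      rw [show (1 - t) * a ^ (q-1) + t * a ^ (q-1) = a ^ (q-1) by ring, one_div,
        Real.rpow_rpow_inv ha.le hp.ne']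
    simp only [hpt, intervalIntegral.integral_const, smul_eq_mul, sub_zero, one_mul]
  · rw [qMean, if_neg hab]
    have hc : 0 < a ^ (q-1) := Real.rpow_pos_of_pos ha _
    have hbp : 0 < b ^ (q-1) := Real.rpow_pos_of_pos hb _
    have hne : a ^ (q-1) ≠ b ^ (q-1) := by
      rcases lt_or_gt_of_ne hab with h | h
      · exact (Real.rpow_lt_rpow ha.le h hp).ne
      · exact (Real.rpow_lt_rpow hb.le h hp).ne'
    have hd : b ^ (q-1) - a ^ (q-1) ≠ 0 := sub_ne_zero.2 (Ne.symm hne)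
    have hr : 0 < 1/(q-1) := by positivity
    have hpos : ∀ t ∈ Icc (0:ℝ) 1, 0 < a ^ (q-1) + t * (b ^ (q-1) - a ^ (q-1)) := by
      intro t ht
      have := qMeanAux.psi_pos hp ht ha hb
      nlinarith
    have hrep : ∀ t : ℝ,
        ((1 - t) * a ^ (q-1) + t * b ^ (q-1)) ^ (1/(q-1))
          = (a ^ (q-1) + t * (b ^ (q-1) - a ^ (q-1))) ^ (1/(q-1)) := by
      intro t; congr 1; ring
    rw [show (fun t : ℝ => ((1 - t) * a ^ (q-1) + t * b ^ (q-1)) ^ (1/(q-1)))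
        = fun t : ℝ => (a ^ (q-1) + t * (b ^ (q-1) - a ^ (q-1))) ^ (1/(q-1)) from
      funext hrep]
    rw [qMeanAux.integral_linear_rpow hd hr hpos]
    rw [show a ^ (q-1) + (b ^ (q-1) - a ^ (q-1)) = b ^ (q-1) by ring]
    have hexp : (q-1) * (1/(q-1) + 1) = q := by field_simp; ring
    have hbq : (b ^ (q-1)) ^ (1/(q-1) + 1) = b ^ q := by
      rw [← Real.rpow_mul hb.le, hexp]
    have haq : (a ^ (q-1)) ^ (1/(q-1) + 1) = a ^ q := by
      rw [← Real.rpow_mul ha.le, hexp]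
    rw [hbq, haq]
    have hq0 : q ≠ 0 := by linarith
    have hsub : a ^ (q-1) - b ^ (q-1) ≠ 0 := sub_ne_zero.2 hne
    have hE : 1/(q-1) + 1 ≠ 0 := by positivity
    field_simp
    ring

/-- **Concavity/convexity of the `q`-mean.**
With the extension `θ_q(a,a) := a` to the diagonal, the function
`(a,b) ↦ θ_q(a,b)` on `(0,∞) × (0,∞)` is concave if `q ∈ (1,2)` and convex if
`q ∈ (2,∞)`. -/
theorem qMean_concaveOn_convexOn (q : ℝ) (hq : 1 < q) :
    (q < 2 → ConcaveOn ℝ (Set.Ioi (0:ℝ) ×ˢ Set.Ioi (0:ℝ))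
      (fun p : ℝ × ℝ => qMean q p.1 p.2)) ∧
    (2 < q → ConvexOn ℝ (Set.Ioi (0:ℝ) ×ˢ Set.Ioi (0:ℝ))
      (fun p : ℝ × ℝ => qMean q p.1 p.2)) := by
  have hp : 0 < q - 1 := by linarith
  set S : Set (ℝ × ℝ) := Set.Ioi (0:ℝ) ×ˢ Set.Ioi (0:ℝ) with hSdef
  have hS : Convex ℝ S := (convex_Ioi 0).prod (convex_Ioi 0)
  have hcone : ∀ z ∈ S, ∀ c : ℝ, 0 < c → c • z ∈ S := by
    intro z hz c hc
    exact ⟨mul_pos hc hz.1, mul_pos hc hz.2⟩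
  have hposS : ∀ t ∈ Icc (0:ℝ) 1, ∀ z ∈ S,
      0 < (1 - t) * z.1 ^ (q-1) + t * z.2 ^ (q-1) := by
    intro t ht z hz
    exact qMeanAux.psi_pos hp ht hz.1 hz.2
  have hEq : Set.EqOn
      (fun z : ℝ × ℝ => ∫ t in (0:ℝ)..1, ((1 - t) * z.1 ^ (q-1) + t * z.2 ^ (q-1)) ^ (1/(q-1)))
      (fun p : ℝ × ℝ => qMean q p.1 p.2) S := by
    intro z hz
    exact (qMeanAux.qMean_eq_integral hq hz.1 hz.2).symm
  constructor
  · intro hq2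
    have hconc : ∀ t ∈ Icc (0:ℝ) 1, ConcaveOn ℝ S
        (fun z : ℝ × ℝ => ((1 - t) * z.1 ^ (q-1) + t * z.2 ^ (q-1)) ^ (1/(q-1))) := by
      intro t ht
      exact qMeanAux.concaveOn_rpow_of_concaveOn hp
        (qMeanAux.psi_concaveOn hp.le (by linarith) ht)
        (hposS t ht) hcone (fun z hz c hc => qMeanAux.psi_hom z hz hc)
    refine ConcaveOn.congr ?_ hEq
    refine ⟨hS, fun x hx y hy s₁ s₂ hs₁ hs₂ hsum => ?_⟩
    have hZS : s₁ • x + s₂ • y ∈ S := hS hx hy hs₁ hs₂ hsum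
    have hix := qMeanAux.integrable hp hx
    have hiy := qMeanAux.integrable hp hy
    have hiz := qMeanAux.integrable hp hZS
    simp only [smul_eq_mul]
    calc s₁ * (∫ t in (0:ℝ)..1, ((1 - t) * x.1 ^ (q-1) + t * x.2 ^ (q-1)) ^ (1/(q-1)))
          + s₂ * (∫ t in (0:ℝ)..1, ((1 - t) * y.1 ^ (q-1) + t * y.2 ^ (q-1)) ^ (1/(q-1)))
        = ∫ t in (0:ℝ)..1,
            (s₁ * ((1 - t) * x.1 ^ (q-1) + t * x.2 ^ (q-1)) ^ (1/(q-1))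
              + s₂ * ((1 - t) * y.1 ^ (q-1) + t * y.2 ^ (q-1)) ^ (1/(q-1))) := by
          rw [intervalIntegral.integral_add (hix.const_mul s₁) (hiy.const_mul s₂),
            intervalIntegral.integral_const_mul, intervalIntegral.integral_const_mul]
      _ ≤ ∫ t in (0:ℝ)..1,
            ((1 - t) * (s₁ • x + s₂ • y).1 ^ (q-1)
              + t * (s₁ • x + s₂ • y).2 ^ (q-1)) ^ (1/(q-1)) := by
          refine intervalIntegral.integral_mono_on zero_le_one
            ((hix.const_mul s₁).add (hiy.const_mul s₂)) hiz ?_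
          intro t ht
          simpa using (hconc t ht).2 hx hy hs₁ hs₂ hsum
  · intro hq2
    have hconv : ∀ t ∈ Icc (0:ℝ) 1, ConvexOn ℝ S
        (fun z : ℝ × ℝ => ((1 - t) * z.1 ^ (q-1) + t * z.2 ^ (q-1)) ^ (1/(q-1))) := by
      intro t ht
      exact qMeanAux.convexOn_rpow_of_convexOn hp
        (qMeanAux.psi_convexOn (by linarith) ht)
        (hposS t ht) hcone (fun z hz c hc => qMeanAux.psi_hom z hz hc)
    refine ConvexOn.congr ?_ hEq
    refine ⟨hS, fun x hx y hy s₁ s₂ hs₁ hs₂ hsum => ?_⟩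
    have hZS : s₁ • x + s₂ • y ∈ S := hS hx hy hs₁ hs₂ hsum
    have hix := qMeanAux.integrable hp hx
    have hiy := qMeanAux.integrable hp hy
    have hiz := qMeanAux.integrable hp hZS
    simp only [smul_eq_mul]
    calc (∫ t in (0:ℝ)..1,
            ((1 - t) * (s₁ • x + s₂ • y).1 ^ (q-1)
              + t * (s₁ • x + s₂ • y).2 ^ (q-1)) ^ (1/(q-1)))
        ≤ ∫ t in (0:ℝ)..1,
            (s₁ * ((1 - t) * x.1 ^ (q-1) + t * x.2 ^ (q-1)) ^ (1/(q-1))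
              + s₂ * ((1 - t) * y.1 ^ (q-1) + t * y.2 ^ (q-1)) ^ (1/(q-1))) := by
          refine intervalIntegral.integral_mono_on zero_le_one hiz
            ((hix.const_mul s₁).add (hiy.const_mul s₂)) ?_
          intro t ht
          simpa using (hconv t ht).2 hx hy hs₁ hs₂ hsum
      _ = s₁ * (∫ t in (0:ℝ)..1, ((1 - t) * x.1 ^ (q-1) + t * x.2 ^ (q-1)) ^ (1/(q-1)))
          + s₂ * (∫ t in (0:ℝ)..1, ((1 - t) * y.1 ^ (q-1) + t * y.2 ^ (q-1)) ^ (1/(q-1))) := by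
          rw [intervalIntegral.integral_add (hix.const_mul s₁) (hiy.const_mul s₂),
            intervalIntegral.integral_const_mul, intervalIntegral.integral_const_mul]
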